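/- For all integers m, n ≥ 3, the m×n Thue–Morse word rectangles have balance exactly 3 if and only if m and n are both odd; that is, the following two conditions together — (i) there exist i, j ≥ 0 with |T(i,m,n) − T(j,m,n)| = 3, and (ii) |T(i,m,n) − T(j,m,n)| ≤ 3 for all i, j ≥ 0 — hold if and only if m and n are both odd. -/

import Mathlib

/-- The Thue–Morse word `t = 01101001⋯`: `t_i` is the number of 1's in the binary
expansion of `i`, reduced modulo 2. -/
def tm (i : ℕ) : ℕ := (Nat.digits 2 i).count 1 % 2

/-- `T(i,m,n) = ∑_{k<m} ∑_{ℓ<n} t_{i+k+ℓ}`, the number of 1's in the `m × n` word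
rectangle whose `(k,ℓ)` entry is `t_{i+k+ℓ}`. -/
def tmT (i m n : ℕ) : ℕ :=
  ∑ k ∈ Finset.range m, ∑ l ∈ Finset.range n, tm (i + k + l)


lemma tm_le (i : ℕ) : tm i ≤ 1 := Nat.lt_succ_iff.mp (Nat.mod_lt _ (by norm_num))

lemma tm_two_mul (x : ℕ) : tm (2 * x) = tm x := by
  rcases Nat.eq_zero_or_pos x with h | h
  · subst h; rfl
  · unfold tm
    rw [Nat.digits_def' (by norm_num : 1 < 2) (by omega : 0 < 2 * x)]
    have h1 : 2 * x % 2 = 0 := by omega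
    have h2 : 2 * x / 2 = x := by omega
    rw [h1, h2]
    simp [List.count_cons]

lemma tm_odd (x : ℕ) : tm (2 * x + 1) = 1 - tm x := by
  unfold tm
  rw [Nat.digits_def' (by norm_num : 1 < 2) (by omega : 0 < 2 * x + 1)]
  have h1 : (2 * x + 1) % 2 = 1 := by omega
  have h2 : (2 * x + 1) / 2 = x := by omega
  rw [h1, h2]
  simp [List.count_cons]
  omega

lemma tm0 : tm 0 = 0 := by unfold tm; simp
lemma tm1 : tm 1 = 1 := by have := tm_odd 0; simpa [tm0] using this
lemma tm2 : tm 2 = 1 := by have := tm_two_mul 1; simpa [tm1] using this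
lemma tm3 : tm 3 = 0 := by have := tm_odd 1; simp [tm1] at this; simpa using this
lemma tm5 : tm 5 = 0 := by have := tm_odd 2; simp [tm2] at this; simpa using this
lemma tm6 : tm 6 = 0 := by have := tm_two_mul 3; simpa [tm3] using this

lemma tm_shift : ∀ (k : ℕ), ∀ v < 2 ^ k, tm (3 * 2 ^ k + v) = tm v := by
  intro k
  induction k with
  | zero => intro v hv; interval_cases v; simpa [tm0] using tm3
  | succ k ih =>
    intro v hv
    rcases Nat.even_or_odd v with ⟨w, hw⟩ | ⟨w, hw⟩
    · have h1 : 3 * 2 ^ (k + 1) + v = 2 * (3 * 2 ^ k + w) := by rw [pow_succ]; omega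
      have h2 : v = 2 * w := by omega
      rw [h1, tm_two_mul, ih w (by rw [pow_succ] at hv; omega), h2, tm_two_mul]
    · have h1 : 3 * 2 ^ (k + 1) + v = 2 * (3 * 2 ^ k + w) + 1 := by rw [pow_succ]; omega
      rw [h1, tm_odd, ih w (by rw [pow_succ] at hv; omega), hw, tm_odd]



noncomputable def S (N : ℕ) : ℤ := ∑ i ∈ Finset.range N, (tm i : ℤ)

noncomputable def W (N : ℕ) : ℤ := ∑ j ∈ Finset.range N, S j

lemma S_succ (n : ℕ) : S (n + 1) = S n + tm n := Finset.sum_range_succ _ n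

lemma tm_odd_int (x : ℕ) : (tm (2 * x + 1) : ℤ) = 1 - tm x := by
  rw [tm_odd]
  have := tm_le x
  push_cast [Nat.cast_sub (tm_le x)]
  ring

lemma S_even : ∀ k, S (2 * k) = k := by
  intro k
  induction k with
  | zero => simp [S]
  | succ k ih =>
    have h1 : 2 * (k + 1) = (2 * k + 1) + 1 := by ring
    rw [h1, S_succ, S_succ, ih, tm_odd_int]
    have h2 : (tm (2 * k) : ℤ) = tm k := by rw [tm_two_mul]
    rw [h2]; push_cast; ring

lemma S_odd (k : ℕ) : S (2 * k + 1) = k + tm k := by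
  rw [S_succ, S_even, tm_two_mul]

lemma W_pair : ∀ k : ℕ, W (2 * k) = (k : ℤ) ^ 2 - k + S k ∧ W (2 * k + 1) = (k : ℤ) ^ 2 + S k := by
  intro k
  induction k with
  | zero => constructor <;> simp [W, S]
  | succ k ih =>
    obtain ⟨ih1, ih2⟩ := ih
    have e1 : 2 * (k + 1) = (2 * k + 1) + 1 := by ring
    have h1 : W (2 * (k + 1)) = W (2 * k + 1) + S (2 * k + 1) := by
      rw [e1]; exact Finset.sum_range_succ _ _
    have h2 : W (2 * (k + 1) + 1) = W (2 * (k + 1)) + S (2 * (k + 1)) := by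
      exact Finset.sum_range_succ _ _
    have hS : S (k + 1) = S k + tm k := S_succ k
    constructor
    · rw [h1, ih2, S_odd, hS]; push_cast; ring
    · rw [h2, h1, ih2, S_odd, S_even, hS]; push_cast; ring

lemma W_even (k : ℕ) : W (2 * k) = (k : ℤ) ^ 2 - k + S k := (W_pair k).1
lemma W_odd (k : ℕ) : W (2 * k + 1) = (k : ℤ) ^ 2 + S k := (W_pair k).2

lemma sum_range_shift (f : ℕ → ℤ) (i m : ℕ) :
    ∑ k ∈ Finset.range m, f (i + k) =
      (∑ j ∈ Finset.range (i + m), f j) - ∑ j ∈ Finset.range i, f j := by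
  induction m with
  | zero => simp
  | succ m ih =>
    rw [Finset.sum_range_succ, ih, show i + (m + 1) = (i + m) + 1 by ring,
      Finset.sum_range_succ]
    ring

lemma tmT_eq (i m n : ℕ) :
    (tmT i m n : ℤ) = W (i + m + n) - W (i + n) - W (i + m) + W i := by
  have hcast : (tmT i m n : ℤ) = ∑ k ∈ Finset.range m, ∑ l ∈ Finset.range n, (tm (i + k + l) : ℤ) := by
    unfold tmT; push_cast; rfl
  rw [hcast]
  have hinner : ∀ k, ∑ l ∈ Finset.range n, (tm (i + k + l) : ℤ) = S (i + k + n) - S (i + k) := by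
    intro k
    have := sum_range_shift (fun j => (tm j : ℤ)) (i + k) n
    simpa [S] using this
  calc ∑ k ∈ Finset.range m, ∑ l ∈ Finset.range n, (tm (i + k + l) : ℤ)
      = ∑ k ∈ Finset.range m, (S ((i + n) + k) - S (i + k)) := by
        apply Finset.sum_congr rfl; intro k _
        rw [hinner k, show i + k + n = (i + n) + k by ring]
    _ = (∑ k ∈ Finset.range m, S ((i + n) + k)) - ∑ k ∈ Finset.range m, S (i + k) := by
        rw [Finset.sum_sub_distrib]
    _ = W (i + m + n) - W (i + n) - W (i + m) + W i := by
        rw [sum_range_shift S (i + n) m, sum_range_shift S i m,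
          show i + n + m = i + m + n by ring]
        unfold W; ring

lemma tm_nonneg_int (z : ℕ) : (0 : ℤ) ≤ tm z := by positivity
lemma tm_le_int (z : ℕ) : (tm z : ℤ) ≤ 1 := by exact_mod_cast tm_le z

lemma window (u p : ℕ) :
    (p : ℤ) ≤ S (u + (2 * p + 1)) - S u ∧ S (u + (2 * p + 1)) - S u ≤ (p : ℤ) + 1 := by
  rcases Nat.even_or_odd u with ⟨q, hq⟩ | ⟨q, hq⟩
  · have h1 : u + (2 * p + 1) = 2 * (q + p) + 1 := by omega
    have h2 : u = 2 * q := by omega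
    rw [h1, h2, S_odd, S_even]
    have := tm_nonneg_int (q + p); have := tm_le_int (q + p)
    constructor <;> [push_cast; push_cast] <;> linarith
  · have h1 : u + (2 * p + 1) = 2 * (q + p + 1) := by omega
    rw [h1, hq, S_even, S_odd]
    have := tm_nonneg_int q; have := tm_le_int q
    constructor <;> [push_cast; push_cast] <;> linarith

lemma T_even (a b u : ℕ) :
    (tmT (2 * u) (2 * a + 1) (2 * b + 1) : ℤ) =
      (2 * a * b + a + b : ℤ) + (S (u + a + b + 1) - S (u + a) - S (u + b) + S u) := by
  rw [tmT_eq]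
  rw [show 2 * u + (2 * a + 1) + (2 * b + 1) = 2 * (u + a + b + 1) by ring,
    show 2 * u + (2 * b + 1) = 2 * (u + b) + 1 by ring,
    show 2 * u + (2 * a + 1) = 2 * (u + a) + 1 by ring,
    W_even, W_odd, W_odd, W_even]
  push_cast; ring

lemma T_odd (a b u : ℕ) :
    (tmT (2 * u + 1) (2 * a + 1) (2 * b + 1) : ℤ) =
      (2 * a * b + a + b + 1 : ℤ) + (S (u + a + b + 1) - S (u + a + 1) - S (u + b + 1) + S u) := by
  rw [tmT_eq]
  rw [show 2 * u + 1 + (2 * a + 1) + (2 * b + 1) = 2 * (u + a + b + 1) + 1 by ring,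
    show 2 * u + 1 + (2 * b + 1) = 2 * (u + b + 1) by ring,
    show 2 * u + 1 + (2 * a + 1) = 2 * (u + a + 1) by ring,
    W_odd, W_even, W_even, W_odd]
  push_cast; ring

lemma F_bounds (a b u : ℕ) :
    (-1 : ℤ) ≤ S (u + a + b + 1) - S (u + a) - S (u + b) + S u ∧
      S (u + a + b + 1) - S (u + a) - S (u + b) + S u ≤ 2 := by
  rcases Nat.even_or_odd b with ⟨r, hr⟩ | ⟨r, hr⟩
  · -- b = 2r even : F = [S((u+a)+(2r+1)) - S(u+a)] - [S(u+(2r+1)) - S u] + tm (u+b)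
    have hb : b = 2 * r := by omega
    have w1 := window (u + a) r
    have w2 := window u r
    have e1 : u + a + b + 1 = (u + a) + (2 * r + 1) := by omega
    have e2 : u + (2 * r + 1) = (u + b) + 1 := by omega
    have e3 : S ((u + b) + 1) = S (u + b) + tm (u + b) := S_succ _
    rw [e2, e3] at w2
    rw [e1]
    have := tm_nonneg_int (u + b); have := tm_le_int (u + b)
    constructor <;> linarith [w1.1, w1.2, w2.1, w2.2]
  · -- b = 2r+1 odd
    have w1 := window (u + a) r
    have w2 := window u r
    have e1 : u + a + b + 1 = ((u + a) + (2 * r + 1)) + 1 := by omega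
    have e2 : u + (2 * r + 1) = u + b := by omega
    have e3 : S (((u + a) + (2 * r + 1)) + 1) = S ((u + a) + (2 * r + 1)) + tm ((u + a) + (2 * r + 1)) := S_succ _
    rw [e2] at w2
    rw [e1, e3]
    have := tm_nonneg_int ((u + a) + (2 * r + 1)); have := tm_le_int ((u + a) + (2 * r + 1))
    constructor <;> linarith [w1.1, w1.2, w2.1, w2.2]

lemma G_bounds (a b u : ℕ) :
    (-2 : ℤ) ≤ S (u + a + b + 1) - S (u + a + 1) - S (u + b + 1) + S u ∧
      S (u + a + b + 1) - S (u + a + 1) - S (u + b + 1) + S u ≤ 1 := by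
  rcases Nat.even_or_odd b with ⟨r, hr⟩ | ⟨r, hr⟩
  · -- b = 2r even : G = [S((u+a+1)+(2r+1)) - S(u+a+1)] - [S(u+(2r+1)) - S u] - tm (u+a+b+1)
    have w1 := window (u + a + 1) r
    have w2 := window u r
    have e1 : (u + a + 1) + (2 * r + 1) = (u + a + b + 1) + 1 := by omega
    have e2 : S ((u + a + b + 1) + 1) = S (u + a + b + 1) + tm (u + a + b + 1) := S_succ _
    rw [e1, e2] at w1
    have e3 : u + (2 * r + 1) = u + b + 1 := by omega
    rw [e3] at w2
    have := tm_nonneg_int (u + a + b + 1); have := tm_le_int (u + a + b + 1)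
    constructor <;> linarith [w1.1, w1.2, w2.1, w2.2]
  · -- b = 2r+1 odd : G = [S((u+a+1)+(2r+1)) - S(u+a+1)] - [S(u+(2r+1)) - S u] - tm (u+b)
    have w1 := window (u + a + 1) r
    have w2 := window u r
    have e1 : (u + a + 1) + (2 * r + 1) = u + a + b + 1 := by omega
    rw [e1] at w1
    have e2 : u + (2 * r + 1) = u + b := by omega
    have e3 : S (u + b + 1) = S (u + b) + tm (u + b) := S_succ _
    rw [e2] at w2
    rw [e3]
    have := tm_nonneg_int (u + b); have := tm_le_int (u + b)
    constructor <;> linarith [w1.1, w1.2, w2.1, w2.2]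

lemma T_bounds (a b i : ℕ) :
    (2 * a * b + a + b - 1 : ℤ) ≤ tmT i (2 * a + 1) (2 * b + 1) ∧
      (tmT i (2 * a + 1) (2 * b + 1) : ℤ) ≤ 2 * a * b + a + b + 2 := by
  rcases Nat.even_or_odd i with ⟨u, hu⟩ | ⟨u, hu⟩
  · have hi : i = 2 * u := by omega
    rw [hi, T_even]
    have := F_bounds a b u
    constructor <;> linarith [this.1, this.2]
  · rw [hu, T_odd]
    have := G_bounds a b u
    constructor <;> linarith [this.1, this.2]

lemma tm_compl : ∀ (c : ℕ), ∀ v < 2 ^ c, (tm (2 ^ c + v) : ℤ) = 1 - tm v := by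
  intro c
  induction c with
  | zero =>
    intro v hv; interval_cases v
    simp [tm0, tm1]
  | succ c ih =>
    intro v hv
    rcases Nat.even_or_odd v with ⟨w, hw⟩ | ⟨w, hw⟩
    · have h1 : 2 ^ (c + 1) + v = 2 * (2 ^ c + w) := by rw [pow_succ]; omega
      have h2 : v = 2 * w := by omega
      rw [h1, tm_two_mul, ih w (by rw [pow_succ] at hv; omega), h2, tm_two_mul]
    · have h1 : 2 ^ (c + 1) + v = 2 * (2 ^ c + w) + 1 := by rw [pow_succ]; omega
      rw [h1, tm_odd_int, ih w (by rw [pow_succ] at hv; omega), hw, tm_odd_int]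

lemma tmT_compl (i m n c : ℕ) (h : i + m + n ≤ 2 ^ c) :
    (tmT (2 ^ c + i) m n : ℤ) = m * n - tmT i m n := by
  have hcast : ∀ j, (tmT j m n : ℤ) = ∑ k ∈ Finset.range m, ∑ l ∈ Finset.range n, (tm (j + k + l) : ℤ) := by
    intro j; unfold tmT; push_cast; rfl
  rw [hcast, hcast]
  have : ∀ k ∈ Finset.range m, ∀ l ∈ Finset.range n,
      (tm (2 ^ c + i + k + l) : ℤ) = 1 - tm (i + k + l) := by
    intro k hk l hl
    simp only [Finset.mem_range] at hk hl
    rw [show 2 ^ c + i + k + l = 2 ^ c + (i + k + l) by ring]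
    exact tm_compl c (i + k + l) (by omega)
  calc ∑ k ∈ Finset.range m, ∑ l ∈ Finset.range n, (tm (2 ^ c + i + k + l) : ℤ)
      = ∑ k ∈ Finset.range m, ∑ l ∈ Finset.range n, (1 - (tm (i + k + l) : ℤ)) := by
        apply Finset.sum_congr rfl; intro k hk
        apply Finset.sum_congr rfl; intro l hl
        exact this k hk l hl
    _ = m * n - ∑ k ∈ Finset.range m, ∑ l ∈ Finset.range n, (tm (i + k + l) : ℤ) := by
        simp [Finset.sum_sub_distrib, Finset.mul_sum]

lemma pat : ∀ (s x y e0 e1 e2 : ℕ), x + y ≤ s → e0 ≤ 1 → e1 ≤ 1 → e2 ≤ 1 →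
    (x = 0 → e0 = e1) → (y = 0 → e1 = e2) →
    (e0 = e1 → e1 = e2 → ¬(x = y ∧ ∃ k, x = 2 ^ k)) →
    ∃ q, tm q = e0 ∧ tm (q + x) = e1 ∧ tm (q + x + y) = e2 := by
  intro s
  induction s using Nat.strong_induction_on with
  | _ s IH =>
  intro x y e0 e1 e2 hs h0 h1 h2 hx0 hy0 hcon
  by_cases hsmall : x + y ≤ 1
  · -- base cases
    have hx1 : x ≤ 1 := by omega
    have hy1 : y ≤ 1 := by omega
    interval_cases x <;> interval_cases y <;> interval_cases e0 <;> interval_cases e1 <;>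
        interval_cases e2 <;>
      first
        | (exfalso; omega)
        | (have hc := hx0 rfl; exfalso; omega)
        | (have hc := hy0 rfl; exfalso; omega)
        | ((refine ⟨0, ?_, ?_, ?_⟩ <;> norm_num [tm0, tm1, tm2, tm3, tm5, tm6]); done)
        | ((refine ⟨1, ?_, ?_, ?_⟩ <;> norm_num [tm0, tm1, tm2, tm3, tm5, tm6]); done)
        | ((refine ⟨2, ?_, ?_, ?_⟩ <;> norm_num [tm0, tm1, tm2, tm3, tm5, tm6]); done)
        | ((refine ⟨5, ?_, ?_, ?_⟩ <;> norm_num [tm0, tm1, tm2, tm3, tm5, tm6]); done)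
  · push_neg at hsmall
    rcases Nat.even_or_odd x with ⟨c, hc⟩ | ⟨c, hc⟩ <;>
      rcases Nat.even_or_odd y with ⟨d, hd⟩ | ⟨d, hd⟩
    · -- x, y both even
      obtain ⟨v, hv0, hv1, hv2⟩ :=
        IH (c + d) (by omega) c d e0 e1 e2 le_rfl h0 h1 h2
          (fun h => hx0 (by omega)) (fun h => hy0 (by omega))
          (fun g1 g2 => by
            rintro ⟨hcd, k, hk⟩
            exact hcon g1 g2 ⟨by omega, k + 1, by rw [pow_succ]; omega⟩)
      refine ⟨2 * v, ?_, ?_, ?_⟩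
      · rw [tm_two_mul]; exact hv0
      · rw [show 2 * v + x = 2 * (v + c) by omega, tm_two_mul]; exact hv1
      · rw [show 2 * v + x + y = 2 * (v + c + d) by omega, tm_two_mul]; exact hv2
    · -- x even, y odd
      by_cases h12 : e1 = e2
      · by_cases hd0 : d = 0
        · -- B2: (1-e0, 1-e1, e2) at gaps (c, d+1), q = 2v+1
          obtain ⟨v, hv0, hv1, hv2⟩ :=
            IH (c + (d + 1)) (by omega) c (d + 1) (1 - e0) (1 - e1) e2 le_rfl
              (by omega) (by omega) h2
              (fun h => by have := hx0 (by omega); omega) (fun h => by omega)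
              (fun g1 g2 => by exfalso; omega)
          refine ⟨2 * v + 1, ?_, ?_, ?_⟩
          · rw [tm_odd]; have := tm_le v; omega
          · rw [show 2 * v + 1 + x = 2 * (v + c) + 1 by omega, tm_odd]
            have := tm_le (v + c); omega
          · rw [show 2 * v + 1 + x + y = 2 * (v + c + (d + 1)) by omega, tm_two_mul]; exact hv2
        · -- B1: (e0, e1, 1-e2) at gaps (c, d), q = 2v
          obtain ⟨v, hv0, hv1, hv2⟩ :=
            IH (c + d) (by omega) c d e0 e1 (1 - e2) le_rfl h0 h1 (by omega)
              (fun h => hx0 (by omega)) (fun h => by omega)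
              (fun g1 g2 => by exfalso; omega)
          refine ⟨2 * v, ?_, ?_, ?_⟩
          · rw [tm_two_mul]; exact hv0
          · rw [show 2 * v + x = 2 * (v + c) by omega, tm_two_mul]; exact hv1
          · rw [show 2 * v + x + y = 2 * (v + c + d) + 1 by omega, tm_odd]
            have := tm_le (v + c + d); omega
      · by_cases h01 : e0 = e1
        · by_cases hpow : c = d ∧ ∃ k, c = 2 ^ k
          · -- B2
            obtain ⟨hcd, -⟩ := hpow
            obtain ⟨v, hv0, hv1, hv2⟩ :=
              IH (c + (d + 1)) (by omega) c (d + 1) (1 - e0) (1 - e1) e2 le_rfl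
                (by omega) (by omega) h2
                (fun h => by have := hx0 (by omega); omega) (fun h => by omega)
                (fun g1 g2 => by rintro ⟨h', -⟩; omega)
            refine ⟨2 * v + 1, ?_, ?_, ?_⟩
            · rw [tm_odd]; have := tm_le v; omega
            · rw [show 2 * v + 1 + x = 2 * (v + c) + 1 by omega, tm_odd]
              have := tm_le (v + c); omega
            · rw [show 2 * v + 1 + x + y = 2 * (v + c + (d + 1)) by omega, tm_two_mul]; exact hv2
          · -- B1
            obtain ⟨v, hv0, hv1, hv2⟩ :=
              IH (c + d) (by omega) c d e0 e1 (1 - e2) le_rfl h0 h1 (by omega)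
                (fun h => hx0 (by omega)) (fun h => by omega)
                (fun g1 g2 => hpow)
            refine ⟨2 * v, ?_, ?_, ?_⟩
            · rw [tm_two_mul]; exact hv0
            · rw [show 2 * v + x = 2 * (v + c) by omega, tm_two_mul]; exact hv1
            · rw [show 2 * v + x + y = 2 * (v + c + d) + 1 by omega, tm_odd]
              have := tm_le (v + c + d); omega
        · -- B1, target non-constant since e0 ≠ e1
          obtain ⟨v, hv0, hv1, hv2⟩ :=
            IH (c + d) (by omega) c d e0 e1 (1 - e2) le_rfl h0 h1 (by omega)
              (fun h => hx0 (by omega)) (fun h => by omega)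
              (fun g1 g2 => absurd g1 h01)
          refine ⟨2 * v, ?_, ?_, ?_⟩
          · rw [tm_two_mul]; exact hv0
          · rw [show 2 * v + x = 2 * (v + c) by omega, tm_two_mul]; exact hv1
          · rw [show 2 * v + x + y = 2 * (v + c + d) + 1 by omega, tm_odd]
            have := tm_le (v + c + d); omega
    · -- x odd, y even
      by_cases h01 : e0 = e1
      · by_cases hc0 : c = 0
        · -- B2: (1-e0, e1, e2) at gaps (c+1, d), q = 2v+1
          obtain ⟨v, hv0, hv1, hv2⟩ :=
            IH ((c + 1) + d) (by omega) (c + 1) d (1 - e0) e1 e2 le_rfl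
              (by omega) h1 h2
              (fun h => by omega) (fun h => hy0 (by omega))
              (fun g1 g2 => by exfalso; omega)
          refine ⟨2 * v + 1, ?_, ?_, ?_⟩
          · rw [tm_odd]; have := tm_le v; omega
          · rw [show 2 * v + 1 + x = 2 * (v + (c + 1)) by omega, tm_two_mul]; exact hv1
          · rw [show 2 * v + 1 + x + y = 2 * (v + (c + 1) + d) by omega, tm_two_mul]; exact hv2
        · -- B1: (e0, 1-e1, 1-e2) at gaps (c, d), q = 2v
          obtain ⟨v, hv0, hv1, hv2⟩ :=
            IH (c + d) (by omega) c d e0 (1 - e1) (1 - e2) le_rfl h0 (by omega) (by omega)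
              (fun h => absurd h hc0) (fun h => by have := hy0 (by omega); omega)
              (fun g1 g2 => by exfalso; omega)
          refine ⟨2 * v, ?_, ?_, ?_⟩
          · rw [tm_two_mul]; exact hv0
          · rw [show 2 * v + x = 2 * (v + c) + 1 by omega, tm_odd]
            have := tm_le (v + c); omega
          · rw [show 2 * v + x + y = 2 * (v + c + d) + 1 by omega, tm_odd]
            have := tm_le (v + c + d); omega
      · by_cases h12 : e1 = e2
        · by_cases hpow : c = d ∧ ∃ k, c = 2 ^ k
          · -- B2
            obtain ⟨hcd, -⟩ := hpow
            obtain ⟨v, hv0, hv1, hv2⟩ :=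
              IH ((c + 1) + d) (by omega) (c + 1) d (1 - e0) e1 e2 le_rfl
                (by omega) h1 h2
                (fun h => by omega) (fun h => hy0 (by omega))
                (fun g1 g2 => by rintro ⟨h', -⟩; omega)
            refine ⟨2 * v + 1, ?_, ?_, ?_⟩
            · rw [tm_odd]; have := tm_le v; omega
            · rw [show 2 * v + 1 + x = 2 * (v + (c + 1)) by omega, tm_two_mul]; exact hv1
            · rw [show 2 * v + 1 + x + y = 2 * (v + (c + 1) + d) by omega, tm_two_mul]; exact hv2
          · -- B1
            obtain ⟨v, hv0, hv1, hv2⟩ :=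
              IH (c + d) (by omega) c d e0 (1 - e1) (1 - e2) le_rfl h0 (by omega) (by omega)
                (fun h => by omega) (fun h => by have := hy0 (by omega); omega)
                (fun g1 g2 => hpow)
            refine ⟨2 * v, ?_, ?_, ?_⟩
            · rw [tm_two_mul]; exact hv0
            · rw [show 2 * v + x = 2 * (v + c) + 1 by omega, tm_odd]
              have := tm_le (v + c); omega
            · rw [show 2 * v + x + y = 2 * (v + c + d) + 1 by omega, tm_odd]
              have := tm_le (v + c + d); omega
        · -- B1, non-constant since e1 ≠ e2
          obtain ⟨v, hv0, hv1, hv2⟩ :=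
            IH (c + d) (by omega) c d e0 (1 - e1) (1 - e2) le_rfl h0 (by omega) (by omega)
              (fun h => by omega) (fun h => by have := hy0 (by omega); omega)
              (fun g1 g2 => by exfalso; omega)
          refine ⟨2 * v, ?_, ?_, ?_⟩
          · rw [tm_two_mul]; exact hv0
          · rw [show 2 * v + x = 2 * (v + c) + 1 by omega, tm_odd]
            have := tm_le (v + c); omega
          · rw [show 2 * v + x + y = 2 * (v + c + d) + 1 by omega, tm_odd]
            have := tm_le (v + c + d); omega
    · -- x odd, y odd
      by_cases h01 : e0 = e1
      · by_cases hc0 : c = 0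
        · -- B2: (1-e0, e1, 1-e2) at gaps (c+1, d), q = 2v+1
          obtain ⟨v, hv0, hv1, hv2⟩ :=
            IH ((c + 1) + d) (by omega) (c + 1) d (1 - e0) e1 (1 - e2) le_rfl
              (by omega) h1 (by omega)
              (fun h => by omega)
              (fun h => by
                rcases eq_or_ne e1 e2 with he | he
                · exfalso
                  exact hcon h01 he ⟨by omega, 0, by rw [pow_zero]; omega⟩
                · omega)
              (fun g1 g2 => by exfalso; omega)
          refine ⟨2 * v + 1, ?_, ?_, ?_⟩
          · rw [tm_odd]; have := tm_le v; omega
          · rw [show 2 * v + 1 + x = 2 * (v + (c + 1)) by omega, tm_two_mul]; exact hv1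
          · rw [show 2 * v + 1 + x + y = 2 * (v + (c + 1) + d) + 1 by omega, tm_odd]
            have := tm_le (v + (c + 1) + d); omega
        · -- B1: (e0, 1-e1, e2) at gaps (c, d+1), q = 2v
          obtain ⟨v, hv0, hv1, hv2⟩ :=
            IH (c + (d + 1)) (by omega) c (d + 1) e0 (1 - e1) e2 le_rfl h0 (by omega) h2
              (fun h => absurd h hc0) (fun h => by omega)
              (fun g1 g2 => by exfalso; omega)
          refine ⟨2 * v, ?_, ?_, ?_⟩
          · rw [tm_two_mul]; exact hv0
          · rw [show 2 * v + x = 2 * (v + c) + 1 by omega, tm_odd]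
            have := tm_le (v + c); omega
          · rw [show 2 * v + x + y = 2 * (v + c + (d + 1)) by omega, tm_two_mul]; exact hv2
      · by_cases h20 : e2 = e0
        · by_cases hpow : c = d + 1 ∧ ∃ k, c = 2 ^ k
          · -- B2
            obtain ⟨hcd, -⟩ := hpow
            obtain ⟨v, hv0, hv1, hv2⟩ :=
              IH ((c + 1) + d) (by omega) (c + 1) d (1 - e0) e1 (1 - e2) le_rfl
                (by omega) h1 (by omega)
                (fun h => by omega) (fun h => by omega)
                (fun g1 g2 => by rintro ⟨h', -⟩; omega)
            refine ⟨2 * v + 1, ?_, ?_, ?_⟩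
            · rw [tm_odd]; have := tm_le v; omega
            · rw [show 2 * v + 1 + x = 2 * (v + (c + 1)) by omega, tm_two_mul]; exact hv1
            · rw [show 2 * v + 1 + x + y = 2 * (v + (c + 1) + d) + 1 by omega, tm_odd]
              have := tm_le (v + (c + 1) + d); omega
          · -- B1
            obtain ⟨v, hv0, hv1, hv2⟩ :=
              IH (c + (d + 1)) (by omega) c (d + 1) e0 (1 - e1) e2 le_rfl h0 (by omega) h2
                (fun h => by omega) (fun h => by omega)
                (fun g1 g2 => hpow)
            refine ⟨2 * v, ?_, ?_, ?_⟩
            · rw [tm_two_mul]; exact hv0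
            · rw [show 2 * v + x = 2 * (v + c) + 1 by omega, tm_odd]
              have := tm_le (v + c); omega
            · rw [show 2 * v + x + y = 2 * (v + c + (d + 1)) by omega, tm_two_mul]; exact hv2
        · -- B1, non-constant since e2 ≠ e0
          obtain ⟨v, hv0, hv1, hv2⟩ :=
            IH (c + (d + 1)) (by omega) c (d + 1) e0 (1 - e1) e2 le_rfl h0 (by omega) h2
              (fun h => by omega) (fun h => by omega)
              (fun g1 g2 => by exfalso; omega)
          refine ⟨2 * v, ?_, ?_, ?_⟩
          · rw [tm_two_mul]; exact hv0
          · rw [show 2 * v + x = 2 * (v + c) + 1 by omega, tm_odd]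
            have := tm_le (v + c); omega
          · rw [show 2 * v + x + y = 2 * (v + c + (d + 1)) by omega, tm_two_mul]; exact hv2

lemma pat_shift (x y e0 e1 e2 M : ℕ)
    (h : ∃ q, tm q = e0 ∧ tm (q + x) = e1 ∧ tm (q + x + y) = e2) :
    ∃ q, M ≤ q ∧ tm q = e0 ∧ tm (q + x) = e1 ∧ tm (q + x + y) = e2 := by
  obtain ⟨q, hq0, hq1, hq2⟩ := h
  set k := q + x + y + M with hk
  have hlt : q + x + y + M < 2 ^ k := Nat.lt_two_pow_self
  refine ⟨3 * 2 ^ k + q, by omega, ?_, ?_, ?_⟩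
  · rw [tm_shift k q (by omega)]; exact hq0
  · rw [show 3 * 2 ^ k + q + x = 3 * 2 ^ k + (q + x) by ring,
      tm_shift k (q + x) (by omega)]; exact hq1
  · rw [show 3 * 2 ^ k + q + x + y = 3 * 2 ^ k + (q + x + y) by ring,
      tm_shift k (q + x + y) (by omega)]; exact hq2

lemma exists_hi (a b : ℕ) (ha : 1 ≤ a) (hb : 1 ≤ b) :
    ∃ i, (tmT i (2 * a + 1) (2 * b + 1) : ℤ) = 2 * a * b + a + b + 2 := by
  rcases Nat.even_or_odd a with ⟨p, hp⟩ | ⟨p, hp⟩ <;>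
    rcases Nat.even_or_odd b with ⟨r, hr⟩ | ⟨r, hr⟩
  · -- a = p+p, b = r+r, p, r ≥ 1 : pattern (0,0,1)
    have hp1 : 1 ≤ p := by omega
    have hr1 : 1 ≤ r := by omega
    rcases le_total p r with hle | hle
    · obtain ⟨q', hM, h0', h1', h2'⟩ := pat_shift (r - p) p 0 0 1 p
        (pat ((r - p) + p) (r - p) p 0 0 1 le_rfl (by norm_num) (by norm_num) (by norm_num)
          (fun _ => rfl) (fun h => by omega) (fun g1 g2 => by exfalso; omega))
      refine ⟨2 * (2 * (q' - p)) + 1, ?_⟩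
      have E1 : tm (q' - p + p) = 0 := by rw [show q' - p + p = q' by omega]; exact h0'
      have E2 : tm (q' - p + r) = 0 := by rw [show q' - p + r = q' + (r - p) by omega]; exact h1'
      have E3 : tm (q' - p + p + r) = 1 := by
        rw [show q' - p + p + r = q' + (r - p) + p by omega]; exact h2'
      rw [T_odd a b (2 * (q' - p)),
        show 2 * (q' - p) + a + b + 1 = 2 * (q' - p + p + r) + 1 by omega, S_odd,
        show 2 * (q' - p) + a + 1 = 2 * (q' - p + p) + 1 by omega, S_odd,
        show 2 * (q' - p) + b + 1 = 2 * (q' - p + r) + 1 by omega, S_odd,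
        S_even, E1, E2, E3]
      have hac : (a : ℤ) = 2 * p := by omega
      have hbc : (b : ℤ) = 2 * r := by omega
      rw [hac, hbc]; push_cast; ring
    · obtain ⟨q', hM, h0', h1', h2'⟩ := pat_shift (p - r) r 0 0 1 r
        (pat ((p - r) + r) (p - r) r 0 0 1 le_rfl (by norm_num) (by norm_num) (by norm_num)
          (fun _ => rfl) (fun h => by omega) (fun g1 g2 => by exfalso; omega))
      refine ⟨2 * (2 * (q' - r)) + 1, ?_⟩
      have E1 : tm (q' - r + r) = 0 := by rw [show q' - r + r = q' by omega]; exact h0'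
      have E2 : tm (q' - r + p) = 0 := by rw [show q' - r + p = q' + (p - r) by omega]; exact h1'
      have E3 : tm (q' - r + p + r) = 1 := by
        rw [show q' - r + p + r = q' + (p - r) + r by omega]; exact h2'
      rw [T_odd a b (2 * (q' - r)),
        show 2 * (q' - r) + a + b + 1 = 2 * (q' - r + p + r) + 1 by omega, S_odd,
        show 2 * (q' - r) + a + 1 = 2 * (q' - r + p) + 1 by omega, S_odd,
        show 2 * (q' - r) + b + 1 = 2 * (q' - r + r) + 1 by omega, S_odd,
        S_even, E1, E2, E3]
      have hac : (a : ℤ) = 2 * p := by omega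
      have hbc : (b : ℤ) = 2 * r := by omega
      rw [hac, hbc]; push_cast; ring
  · -- a = p+p (p ≥ 1), b = 2r+1 : pattern (1,0,1) at gaps (p, r+1)
    have hp1 : 1 ≤ p := by omega
    obtain ⟨q, h0', h1', h2'⟩ :=
      pat (p + (r + 1)) p (r + 1) 1 0 1 le_rfl (by norm_num) (by norm_num) (by norm_num)
        (fun h => by omega) (fun h => by omega) (fun g1 g2 => by exfalso; omega)
    refine ⟨2 * (2 * q + 1), ?_⟩
    rw [T_even a b (2 * q + 1),
      show 2 * q + 1 + a + b + 1 = 2 * (q + p + (r + 1)) + 1 by omega, S_odd,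
      show 2 * q + 1 + a = 2 * (q + p) + 1 by omega, S_odd,
      show 2 * q + 1 + b = 2 * (q + (r + 1)) by omega, S_even,
      show (2 * q + 1 : ℕ) = 2 * q + 1 by rfl, S_odd]
    rw [show q + p + (r + 1) = q + p + r + 1 by omega] at h2'
    rw [show q + p + (r + 1) = q + p + r + 1 by omega, h0', h1', h2']
    have hac : (a : ℤ) = 2 * p := by omega
    have hbc : (b : ℤ) = 2 * r + 1 := by omega
    rw [hac, hbc]; push_cast; ring
  · -- a = 2p+1, b = r+r (r ≥ 1) : pattern (1,0,1) at gaps (r, p+1)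
    have hr1 : 1 ≤ r := by omega
    obtain ⟨q, h0', h1', h2'⟩ :=
      pat (r + (p + 1)) r (p + 1) 1 0 1 le_rfl (by norm_num) (by norm_num) (by norm_num)
        (fun h => by omega) (fun h => by omega) (fun g1 g2 => by exfalso; omega)
    refine ⟨2 * (2 * q + 1), ?_⟩
    rw [T_even a b (2 * q + 1),
      show 2 * q + 1 + a + b + 1 = 2 * (q + r + (p + 1)) + 1 by omega, S_odd,
      show 2 * q + 1 + a = 2 * (q + (p + 1)) by omega, S_even,
      show 2 * q + 1 + b = 2 * (q + r) + 1 by omega, S_odd,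
      show (2 * q + 1 : ℕ) = 2 * q + 1 by rfl, S_odd, h0', h1', h2']
    have hac : (a : ℤ) = 2 * p + 1 := by omega
    have hbc : (b : ℤ) = 2 * r := by omega
    rw [hac, hbc]; push_cast; ring
  · -- a = 2p+1, b = 2r+1 : pattern (1,0,0)
    rcases le_total p r with hle | hle
    · obtain ⟨q, h0', h1', h2'⟩ :=
        pat ((p + 1) + (r - p)) (p + 1) (r - p) 1 0 0 le_rfl (by norm_num) (by norm_num)
          (by norm_num) (fun h => by omega) (fun _ => rfl) (fun g1 g2 => by exfalso; omega)
      refine ⟨2 * (2 * q + 1) + 1, ?_⟩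
      rw [T_odd a b (2 * q + 1),
        show 2 * q + 1 + a + b + 1 = 2 * (q + p + r + 2) by omega, S_even,
        show 2 * q + 1 + a + 1 = 2 * (q + (p + 1)) + 1 by omega, S_odd,
        show 2 * q + 1 + b + 1 = 2 * (q + (p + 1) + (r - p)) + 1 by omega, S_odd,
        show (2 * q + 1 : ℕ) = 2 * q + 1 by rfl, S_odd, h0', h1', h2']
      have hac : (a : ℤ) = 2 * p + 1 := by omega
      have hbc : (b : ℤ) = 2 * r + 1 := by omega
      have hsub : ((r - p : ℕ) : ℤ) = (r : ℤ) - p := by omega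
      rw [hac, hbc]; push_cast [hsub]; ring
    · obtain ⟨q, h0', h1', h2'⟩ :=
        pat ((r + 1) + (p - r)) (r + 1) (p - r) 1 0 0 le_rfl (by norm_num) (by norm_num)
          (by norm_num) (fun h => by omega) (fun _ => rfl) (fun g1 g2 => by exfalso; omega)
      refine ⟨2 * (2 * q + 1) + 1, ?_⟩
      rw [T_odd a b (2 * q + 1),
        show 2 * q + 1 + a + b + 1 = 2 * (q + p + r + 2) by omega, S_even,
        show 2 * q + 1 + a + 1 = 2 * (q + (r + 1) + (p - r)) + 1 by omega, S_odd,
        show 2 * q + 1 + b + 1 = 2 * (q + (r + 1)) + 1 by omega, S_odd,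
        show (2 * q + 1 : ℕ) = 2 * q + 1 by rfl, S_odd, h0', h1', h2']
      have hac : (a : ℤ) = 2 * p + 1 := by omega
      have hbc : (b : ℤ) = 2 * r + 1 := by omega
      have hsub : ((p - r : ℕ) : ℤ) = (p : ℤ) - r := by omega
      rw [hac, hbc]; push_cast [hsub]; ring

theorem tm_rectangle_balance_three_iff_odd (m n : ℕ) (hm : 3 ≤ m) (hn : 3 ≤ n) :
    ((∃ i j : ℕ, |(tmT i m n : ℤ) - (tmT j m n : ℤ)| = 3) ∧
      (∀ i j : ℕ, |(tmT i m n : ℤ) - (tmT j m n : ℤ)| ≤ 3)) ↔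
    (Odd m ∧ Odd n) := by
  constructor
  · rintro ⟨⟨i, j, h3⟩, hall⟩
    by_contra hno
    have hmn : Even (m * n) := by
      rcases Nat.even_or_odd m with hm' | hm'
      · exact hm'.mul_right n
      · rcases Nat.even_or_odd n with hn' | hn'
        · exact hn'.mul_left m
        · exact absurd ⟨hm', hn'⟩ hno
    obtain ⟨e, he⟩ := hmn
    have hMN : (m : ℤ) * n = (e : ℤ) + e := by exact_mod_cast he
    have h1 := tmT_compl i m n (i + m + n) (le_of_lt (Nat.lt_two_pow_self))
    have h2 := tmT_compl j m n (j + m + n) (le_of_lt (Nat.lt_two_pow_self))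
    have hA := hall i (2 ^ (i + m + n) + i)
    have hB := hall j (2 ^ (j + m + n) + j)
    rw [h1, hMN] at hA
    rw [h2, hMN] at hB
    rw [abs_le] at hA hB
    rcases (abs_eq (by norm_num : (0:ℤ) ≤ 3)).mp h3 with h | h <;> omega
  · rintro ⟨⟨a, ha⟩, ⟨b, hb⟩⟩
    have ha' : m = 2 * a + 1 := by omega
    have hb' : n = 2 * b + 1 := by omega
    have ha1 : 1 ≤ a := by omega
    have hb1 : 1 ≤ b := by omega
    subst ha'; subst hb'
    constructor
    · obtain ⟨i, hi⟩ := exists_hi a b ha1 hb1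
      refine ⟨i, 2 ^ (i + (2 * a + 1) + (2 * b + 1)) + i, ?_⟩
      have hc := tmT_compl i (2 * a + 1) (2 * b + 1) (i + (2 * a + 1) + (2 * b + 1))
        (le_of_lt (Nat.lt_two_pow_self))
      rw [hc, hi, abs_eq (by norm_num : (0:ℤ) ≤ 3)]
      left; push_cast; ring
    · intro i j
      have Bi := T_bounds a b i
      have Bj := T_bounds a b j
      rw [abs_le]
      constructor <;> linarith [Bi.1, Bi.2, Bj.1, Bj.2]
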